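/- arXiv:math/0603542 — 3 statements merged into one kernel-verified Lean document; each statement's English description precedes it below -/
import Mathlib

section
/- For every n ≥ 0, η-almost everywhere one has E_η[u_{n+1}² | F_n] = (n/(n+2)) · u_n² + 1. -/
open MeasureTheory Filter
open scoped ENNReal

/-- The Euler path space: a point is an infinite edge path in the Euler graph,
`x n : Fin (n+2)` being the label of the edge chosen from level `n` to level `n+1`. -/
abbrev EulerPath : Type := ∀ n : ℕ, Fin (n + 2)

/-- Vertex labels: `kv x n` is the `k` with the path `x` passing through vertex `(n,k)`.
A label `(x n : ℕ) ≤ kv x n` is a left turn (edge to `(n+1, kv x n)`), a larger label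
is a right turn (edge to `(n+1, kv x n + 1)`). -/
def kv (x : EulerPath) : ℕ → ℕ
  | 0 => 0
  | n + 1 => if (x n : ℕ) ≤ kv x n then kv x n else kv x n + 1

/-- The symmetric measure: the product over `n` of the uniform probability measures on
`Fin (n+2)`, characterized as the probability measure giving each cylinder of length `n`
the measure `∏_{i<n} 1/(i+2)`. -/
def IsSymmetricMeasure (η : Measure EulerPath) : Prop :=
  IsProbabilityMeasure η ∧
    ∀ (n : ℕ) (c : EulerPath),
      η {x | ∀ i < n, x i = c i} = ∏ i ∈ Finset.range n, ((i : ℝ≥0∞) + 2)⁻¹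

/-- `u_n = 2 k_n - n` (an integer, viewed in `ℝ`). -/
def u (n : ℕ) (x : EulerPath) : ℝ :=
  ((2 * (kv x n : ℤ) - (n : ℤ) : ℤ) : ℝ)

/-- `F_n`: the σ-algebra on `X` generated by the coordinates `x_0, …, x_{n-1}`. -/
def coordAlg (n : ℕ) : MeasurableSpace EulerPath :=
  ⨆ i : Fin n, MeasurableSpace.comap (fun x => x i) inferInstance

/-- The filtration `(F_n)` on `X`. -/
def coordFil : Filtration ℕ (inferInstance : MeasurableSpace EulerPath) where
  seq := coordAlg
  mono' := by
    intro i j hij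
    exact iSup_le fun v => le_iSup_of_le (⟨v.1, lt_of_lt_of_le v.2 hij⟩ : Fin j) le_rfl
  le' := fun i => iSup_le fun v => Measurable.comap_le (measurable_pi_apply _)

section EulerAux

open Finset in
lemma euler_kv_le (x : EulerPath) : ∀ m, kv x m ≤ m
  | 0 => le_refl 0
  | m + 1 => by
    simp only [kv]
    split
    · exact (euler_kv_le x m).trans (Nat.le_succ m)
    · exact Nat.succ_le_succ (euler_kv_le x m)

lemma euler_kv_congr {x y : EulerPath} : ∀ {m : ℕ}, (∀ i < m, x i = y i) → kv x m = kv y m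
  | 0, _ => rfl
  | m + 1, h => by
    have ih : kv x m = kv y m :=
      euler_kv_congr fun i hi => h i (hi.trans (Nat.lt_succ_self m))
    simp only [kv, ih, h m (Nat.lt_succ_self m)]

lemma euler_measurable_coord {m i : ℕ} (h : i < m) :
    Measurable[coordAlg m] fun x : EulerPath => x i :=
  Measurable.of_comap_le
    (le_iSup (fun j : Fin m =>
      MeasurableSpace.comap (fun x : EulerPath => x j) inferInstance) ⟨i, h⟩)

lemma euler_measurable_kv : ∀ m, Measurable[coordAlg m] fun x : EulerPath => kv x m
  | 0 => measurable_const
  | m + 1 => by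
    have h1 : Measurable[coordAlg (m + 1)] fun x : EulerPath => (x m : ℕ) :=
      (Measurable.of_discrete (f := fun a : Fin (m + 2) => (a : ℕ))).comp
        (euler_measurable_coord (Nat.lt_succ_self m))
    have h2 : Measurable[coordAlg (m + 1)] fun x : EulerPath => kv x m :=
      (euler_measurable_kv m).mono (coordFil.mono (Nat.le_succ m)) le_rfl
    have : (fun x : EulerPath => kv x (m + 1))
        = fun x => if (x m : ℕ) ≤ kv x m then kv x m else kv x m + 1 := by
      funext x; simp only [kv]
    rw [this]
    exact Measurable.ite (measurableSet_le h1 h2) h2 (h2.add_const 1)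

lemma euler_measurable_u (m : ℕ) : Measurable[coordAlg m] (u m) :=
  (Measurable.of_discrete (f := fun a : ℕ => ((2 * (a : ℤ) - (m : ℤ) : ℤ) : ℝ))).comp
    (euler_measurable_kv m)

lemma euler_u_abs_le (m : ℕ) (x : EulerPath) : |u m x| ≤ (m : ℝ) := by
  have hk := euler_kv_le x m
  have h0 : (0 : ℕ) ≤ kv x m := Nat.zero_le _
  rw [u, abs_le]
  have hk' : (kv x m : ℝ) ≤ (m : ℝ) := Nat.cast_le.mpr hk
  have h0' : (0 : ℝ) ≤ (kv x m : ℝ) := Nat.cast_nonneg _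
  constructor <;> push_cast <;> nlinarith

lemma euler_integrable_u_sq (η : Measure EulerPath) [IsFiniteMeasure η] (m : ℕ) :
    Integrable (fun x => (u m x) ^ 2) η := by
  have hmeas : Measurable fun x : EulerPath => (u m x) ^ 2 :=
    (((euler_measurable_u m).mono (coordFil.le m) le_rfl).pow_const 2)
  refine Integrable.mono' (integrable_const ((m : ℝ) ^ 2)) hmeas.aestronglyMeasurable
    (Filter.Eventually.of_forall fun x => ?_)
  have h := euler_u_abs_le m x
  have h0 := abs_nonneg (u m x)
  have hm0 : (0:ℝ) ≤ (m:ℝ) := Nat.cast_nonneg _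
  rw [Real.norm_eq_abs, ← sq_abs (u m x)]
  rw [abs_of_nonneg (by positivity : (0:ℝ) ≤ |u m x| ^ 2)]
  nlinarith

lemma euler_measurableSet_cyl (m : ℕ) (c : EulerPath) :
    MeasurableSet[coordAlg m] {x : EulerPath | ∀ i < m, x i = c i} := by
  have : {x : EulerPath | ∀ i < m, x i = c i}
      = ⋂ i ∈ Set.Iio m, {x : EulerPath | x i = c i} := by
    ext x; simp [Set.mem_iInter]
  rw [this]
  exact MeasurableSet.biInter (Set.to_countable _) fun i hi =>
    euler_measurable_coord hi (measurableSet_singleton (c i))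

lemma euler_cyl_toReal (η : Measure EulerPath)
    (hcyl : ∀ (m : ℕ) (c : EulerPath),
      η {x | ∀ i < m, x i = c i} = ∏ i ∈ Finset.range m, ((i : ℝ≥0∞) + 2)⁻¹)
    (m : ℕ) (c : EulerPath) :
    (η {x | ∀ i < m, x i = c i}).toReal = ∏ i ∈ Finset.range m, ((i : ℝ) + 2)⁻¹ := by
  rw [hcyl m c, ENNReal.toReal_prod]
  refine Finset.prod_congr rfl fun i _ => ?_
  rw [ENNReal.toReal_inv]
  norm_num
  rw [ENNReal.toReal_add (by simp) (by simp)]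
  simp

lemma euler_arith (n k : ℕ) (hk : k ≤ n) :
    (((n : ℝ)) + 2)⁻¹ * ∑ j ∈ Finset.range (n + 2),
        (if j ≤ k then (2 * (k : ℝ) - ((n : ℝ) + 1)) ^ 2
          else (2 * (k : ℝ) + 2 - ((n : ℝ) + 1)) ^ 2)
      = (n : ℝ) / ((n : ℝ) + 2) * (2 * (k : ℝ) - (n : ℝ)) ^ 2 + 1 := by
  have hf1 : Finset.filter (fun j => j ≤ k) (Finset.range (n + 2)) = Finset.range (k + 1) := by
    ext j; simp only [Finset.mem_filter, Finset.mem_range]; omega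
  have hf2 : Finset.filter (fun j => ¬ j ≤ k) (Finset.range (n + 2))
      = Finset.Ico (k + 1) (n + 2) := by
    ext j; simp only [Finset.mem_filter, Finset.mem_range, Finset.mem_Ico]; omega
  rw [Finset.sum_ite, hf1, hf2, Finset.sum_const, Finset.sum_const, Finset.card_range,
    Nat.card_Ico, nsmul_eq_mul, nsmul_eq_mul]
  have hcast : ((n + 2 - (k + 1) : ℕ) : ℝ) = (n : ℝ) + 2 - ((k : ℝ) + 1) := by
    have : k + 1 ≤ n + 2 := by omega
    rw [Nat.cast_sub this]
    push_cast
    ring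
  rw [hcast]
  have hne : ((n : ℝ)) + 2 ≠ 0 := by positivity
  push_cast
  field_simp
  ring

end EulerAux

lemma euler_cyl_key (η : Measure EulerPath) [IsFiniteMeasure η]
    (hcyl : ∀ (m : ℕ) (c : EulerPath),
      η {x | ∀ i < m, x i = c i} = ∏ i ∈ Finset.range m, ((i : ℝ≥0∞) + 2)⁻¹)
    (n : ℕ) (c : EulerPath) :
    ∫ x in {x | ∀ i < n, x i = c i}, (u (n + 1) x) ^ 2 ∂η
      = ∫ x in {x | ∀ i < n, x i = c i},
          ((n : ℝ) / ((n : ℝ) + 2) * (u n x) ^ 2 + 1) ∂η := by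
  classical
  set k := kv c n with hkdef
  have hk : k ≤ n := euler_kv_le c n
  set C := {x : EulerPath | ∀ i < n, x i = c i} with hCdef
  have hCmeas : MeasurableSet C := coordFil.le n _ (euler_measurableSet_cyl n c)
  set r : ℝ := ∏ i ∈ Finset.range n, ((i : ℝ) + 2)⁻¹ with hrdef
  -- right-hand side
  have hRHS : ∫ x in C, ((n : ℝ) / ((n : ℝ) + 2) * (u n x) ^ 2 + 1) ∂η
      = r * ((n : ℝ) / ((n : ℝ) + 2) * (u n c) ^ 2 + 1) := by
    rw [setIntegral_congr_fun (g := fun _ : EulerPath =>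
        ((n : ℝ) / ((n : ℝ) + 2) * (u n c) ^ 2 + 1)) hCmeas ?_,
      setIntegral_const, smul_eq_mul, measureReal_def, euler_cyl_toReal η hcyl n c]
    intro x hx
    have hkv : kv x n = kv c n := euler_kv_congr hx
    simp [u, hkv]
  -- decomposition of C into level-(n+1) cylinders
  set D : Fin (n + 2) → Set EulerPath :=
    fun j => {x | ∀ i < n + 1, x i = Function.update c n j i} with hDdef
  have hDmeas : ∀ j, MeasurableSet (D j) := fun j =>
    coordFil.le (n + 1) _ (euler_measurableSet_cyl (n + 1) _)
  have hDsub : ∀ j, ∀ x ∈ D j, (∀ i < n, x i = c i) ∧ x n = j := by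
    intro j x hx
    constructor
    · intro i hi
      have h := hx i (by omega)
      rwa [Function.update_of_ne (by omega)] at h
    · have h := hx n (by omega)
      rwa [Function.update_self] at h
  have hCun : C = ⋃ j ∈ (Finset.univ : Finset (Fin (n + 2))), D j := by
    ext x
    simp only [Set.mem_iUnion, Finset.mem_univ, exists_prop, true_and]
    constructor
    · intro hx
      refine ⟨x n, fun i hi => ?_⟩
      rcases Nat.lt_succ_iff_lt_or_eq.mp hi with h | h
      · rw [Function.update_of_ne (by omega)]; exact hx i h
      · subst h; rw [Function.update_self]
    · rintro ⟨j, hj⟩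
      exact (hDsub j x hj).1
  have hdisj : Set.Pairwise ↑(Finset.univ : Finset (Fin (n + 2))) (Function.onFun Disjoint D) := by
    intro j _ j' _ hne
    rw [Function.onFun, Set.disjoint_left]
    intro x hx hx'
    exact hne (((hDsub j x hx).2.symm.trans (hDsub j' x hx').2))
  have hsplit : ∫ x in C, (u (n + 1) x) ^ 2 ∂η
      = ∑ j : Fin (n + 2), ∫ x in D j, (u (n + 1) x) ^ 2 ∂η := by
    rw [hCun, integral_biUnion_finset _ (fun j _ => hDmeas j) hdisj
      (fun j _ => (euler_integrable_u_sq η (n + 1)).integrableOn)]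
  have hterm : ∀ j : Fin (n + 2), ∫ x in D j, (u (n + 1) x) ^ 2 ∂η
      = r * ((n : ℝ) + 2)⁻¹ *
        (if (j : ℕ) ≤ k then (2 * (k : ℝ) - ((n : ℝ) + 1)) ^ 2
          else (2 * (k : ℝ) + 2 - ((n : ℝ) + 1)) ^ 2) := by
    intro j
    have hval : Set.EqOn (fun x => (u (n + 1) x) ^ 2)
        (fun _ : EulerPath => (if (j : ℕ) ≤ k then (2 * (k : ℝ) - ((n : ℝ) + 1)) ^ 2
          else (2 * (k : ℝ) + 2 - ((n : ℝ) + 1)) ^ 2)) (D j) := by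
      intro x hx
      obtain ⟨h1, h2⟩ := hDsub j x hx
      have hkv : kv x n = k := euler_kv_congr h1
      have hkv1 : kv x (n + 1) = if (j : ℕ) ≤ k then k else k + 1 := by
        simp only [kv, hkv, h2]
      simp only [u, hkv1]
      split_ifs with h
      · push_cast; ring
      · push_cast; ring
    rw [setIntegral_congr_fun (hDmeas j) hval, setIntegral_const, smul_eq_mul, measureReal_def,
      euler_cyl_toReal η hcyl (n + 1) _, Finset.prod_range_succ]
  have hu : u n c = 2 * (k : ℝ) - (n : ℝ) := by rw [u]; push_cast; ring
  rw [hsplit, hRHS, hu]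
  calc ∑ j : Fin (n + 2), ∫ x in D j, (u (n + 1) x) ^ 2 ∂η
      = ∑ j : Fin (n + 2), r * ((n : ℝ) + 2)⁻¹ *
          (if (j : ℕ) ≤ k then (2 * (k : ℝ) - ((n : ℝ) + 1)) ^ 2
            else (2 * (k : ℝ) + 2 - ((n : ℝ) + 1)) ^ 2) :=
        Finset.sum_congr rfl fun j _ => hterm j
    _ = r * (((n : ℝ) + 2)⁻¹ * ∑ j ∈ Finset.range (n + 2),
          (if j ≤ k then (2 * (k : ℝ) - ((n : ℝ) + 1)) ^ 2
            else (2 * (k : ℝ) + 2 - ((n : ℝ) + 1)) ^ 2)) := by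
        rw [← Finset.mul_sum, Fin.sum_univ_eq_sum_range (fun j =>
          (if j ≤ k then (2 * (k : ℝ) - ((n : ℝ) + 1)) ^ 2
            else (2 * (k : ℝ) + 2 - ((n : ℝ) + 1)) ^ 2)), mul_assoc]
    _ = r * ((n : ℝ) / ((n : ℝ) + 2) * (2 * (k : ℝ) - (n : ℝ)) ^ 2 + 1) := by
        rw [euler_arith n k hk]

def eulerExt (m : ℕ) (t : ∀ i : Fin m, Fin ((i : ℕ) + 2)) : EulerPath :=
  fun i => if h : i < m then t ⟨i, h⟩ else ⟨0, by omega⟩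

lemma euler_preimage_singleton (m : ℕ) (t : ∀ i : Fin m, Fin ((i : ℕ) + 2)) :
    (fun (x : EulerPath) (i : Fin m) => x i) ⁻¹' {t}
      = {x : EulerPath | ∀ i < m, x i = eulerExt m t i} := by
  ext x
  simp only [Set.mem_preimage, Set.mem_singleton_iff, funext_iff, Set.mem_setOf_eq]
  constructor
  · intro h i hi
    have h2 := h ⟨i, hi⟩
    simpa [eulerExt, hi] using h2
  · intro h i
    have h2 := h i i.isLt
    simpa [eulerExt, i.isLt] using h2

/-- `η`-almost everywhere, `E_η[u_{n+1}² | F_n] = (n/(n+2)) · u_n² + 1`. -/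
theorem euler_u_sq_condexp
    (η : Measure EulerPath) (hη : IsSymmetricMeasure η) (n : ℕ) :
    MeasureTheory.condExp (coordAlg n) η (fun x => (u (n + 1) x) ^ 2) =ᵐ[η]
      fun x => ((n : ℝ) / ((n : ℝ) + 2)) * (u n x) ^ 2 + 1 := by
  classical
  obtain ⟨hprob, hcyl⟩ := hη
  haveI := hprob
  have hm : coordAlg n ≤ (inferInstance : MeasurableSpace EulerPath) := coordFil.le n
  haveI : SigmaFinite (η.trim hm) := inferInstance
  have hf_int : Integrable (fun x => (u (n + 1) x) ^ 2) η := euler_integrable_u_sq η (n + 1)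
  have hg_meas : Measurable[coordAlg n]
      fun x => (n : ℝ) / ((n : ℝ) + 2) * (u n x) ^ 2 + 1 :=
    (((euler_measurable_u n).pow_const 2).const_mul _).add_const 1
  have hg_int : Integrable (fun x => (n : ℝ) / ((n : ℝ) + 2) * (u n x) ^ 2 + 1) η :=
    ((euler_integrable_u_sq η n).const_mul _).add (integrable_const 1)
  refine (ae_eq_condExp_of_forall_setIntegral_eq hm hf_int
    (fun s _ _ => hg_int.integrableOn)
    (fun s hs _ => ?_)
    (StronglyMeasurable.aestronglyMeasurable hg_meas.stronglyMeasurable)).symm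
  have hle : coordAlg n ≤ MeasurableSpace.comap
      (fun (x : EulerPath) (i : Fin n) => x i) ⊤ := by
    refine iSup_le fun i => ?_
    have hcomp : (fun x : EulerPath => x (i : ℕ))
        = (fun p : ∀ j : Fin n, Fin ((j : ℕ) + 2) => p i)
          ∘ (fun (x : EulerPath) (j : Fin n) => x j) := rfl
    rw [hcomp, ← MeasurableSpace.comap_comp]
    exact MeasurableSpace.comap_mono le_top
  obtain ⟨S, -, rfl⟩ := hle s hs
  have hmeasT : ∀ t : (∀ i : Fin n, Fin ((i : ℕ) + 2)),
      MeasurableSet ((fun (x : EulerPath) (i : Fin n) => x i) ⁻¹' {t}) := by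
    intro t
    rw [euler_preimage_singleton]
    exact coordFil.le n _ (euler_measurableSet_cyl n _)
  have hdisjT : Set.Pairwise ↑(S.toFinite.toFinset)
      (Function.onFun Disjoint fun t => (fun (x : EulerPath) (i : Fin n) => x i) ⁻¹' {t}) := by
    intro t _ t' _ hne
    rw [Function.onFun, Set.disjoint_left]
    intro x hx hx'
    exact hne ((Set.mem_singleton_iff.mp hx).symm.trans (Set.mem_singleton_iff.mp hx'))
  have hrep : (fun (x : EulerPath) (i : Fin n) => x i) ⁻¹' S
      = ⋃ t ∈ S.toFinite.toFinset,
          ((fun (x : EulerPath) (i : Fin n) => x i) ⁻¹' {t}) := by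
    ext x
    simp only [Set.mem_iUnion, Set.Finite.mem_toFinset, Set.mem_preimage,
      Set.mem_singleton_iff, exists_prop]
    constructor
    · intro hx; exact ⟨_, hx, rfl⟩
    · rintro ⟨t, ht, rfl⟩; exact ht
  rw [hrep,
    integral_biUnion_finset _ (fun t _ => hmeasT t) hdisjT (fun t _ => hg_int.integrableOn),
    integral_biUnion_finset _ (fun t _ => hmeasT t) hdisjT (fun t _ => hf_int.integrableOn)]
  refine Finset.sum_congr rfl fun t _ => ?_
  rw [euler_preimage_singleton]
  exact (euler_cyl_key η hcyl n (eulerExt n t)).symm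
end

section
/- For every n ≥ 1, the variance of u_n under η is ∫_X u_n² dη = (n+2)/3 (and ∫_X u_n dη = 0). -/
open MeasureTheory Filter
open scoped ENNReal

def kvF : ∀ n : ℕ, (∀ i : Fin n, Fin (i + 2)) → ℕ
  | 0, _ => 0
  | n+1, d =>
    let k := kvF n (fun i => d i.castSucc)
    if (d (Fin.last n) : ℕ) ≤ k then k else k + 1

lemma kvF_eq (x : EulerPath) : ∀ n : ℕ, kv x n = kvF n (fun i : Fin n => x i)
  | 0 => rfl
  | n+1 => by
    show (if (x n : ℕ) ≤ kv x n then kv x n else kv x n + 1) = _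
    rw [kvF, kvF_eq x n]
    rfl

lemma kvF_le : ∀ (n : ℕ) (d : ∀ i : Fin n, Fin (i + 2)), kvF n d ≤ n
  | 0, _ => le_refl 0
  | n+1, d => by
    rw [kvF]
    have := kvF_le n (fun i => d i.castSucc)
    split <;> omega

lemma kvF_snoc (n : ℕ) (p : ∀ i : Fin n, Fin (i + 2)) (a : Fin (n + 2)) :
    kvF (n+1) (Fin.snoc p a) =
      if (a : ℕ) ≤ kvF n p then kvF n p else kvF n p + 1 := by
  rw [kvF]
  have h1 : (fun i : Fin n => (Fin.snoc p a : ∀ i : Fin (n+1), Fin (i + 2)) i.castSucc) = p := by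
    funext i; exact Fin.snoc_castSucc (α := fun i : Fin (n+1) => Fin ((i : ℕ) + 2)) (p := p) (x := a) (i := i)
  have h2 : (Fin.snoc p a : ∀ i : Fin (n+1), Fin (i + 2)) (Fin.last n) = a :=
    Fin.snoc_last (α := fun i : Fin (n+1) => Fin ((i : ℕ) + 2)) (p := p) (x := a)
  rw [h1, h2]

lemma sum_step (n : ℕ) (F : ℕ → ℝ) :
    ∑ d : ∀ i : Fin (n+1), Fin (i + 2), F (kvF (n+1) d) =
      ∑ p : ∀ i : Fin n, Fin (i + 2), ∑ a : Fin (n+2),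
        F (if (a : ℕ) ≤ kvF n p then kvF n p else kvF n p + 1) := by
  rw [← Equiv.sum_comp (Fin.snocEquiv (fun i : Fin (n+1) => Fin (i + 2)))
    (fun d => F (kvF (n+1) d)), Fintype.sum_prod_type]
  rw [Finset.sum_comm]
  refine Finset.sum_congr rfl fun p _ => Finset.sum_congr rfl fun a _ => ?_
  exact congrArg F (kvF_snoc n p a)

lemma innerSum' (n k : ℕ) (hk : k ≤ n) (F : ℕ → ℝ) :
    ∑ a : Fin (n+2), F (if (a : ℕ) ≤ k then k else k + 1)
      = (k + 1 : ℝ) * F k + ((n + 1 - k : ℕ) : ℝ) * F (k+1) := by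
  rw [Fin.sum_univ_eq_sum_range (fun j => F (if j ≤ k then k else k + 1)) (n+2)]
  simp only [apply_ite F]
  rw [Finset.sum_ite, Finset.sum_const, Finset.sum_const]
  have h1 : (Finset.range (n+2)).filter (fun j => j ≤ k) = Finset.range (k+1) := by
    ext j; simp; omega
  have h2 : (Finset.range (n+2)).filter (fun j => ¬ j ≤ k) =
      (Finset.range (n+2)) \ Finset.range (k+1) := by
    ext j; simp
  rw [h1, h2, Finset.card_range, Finset.card_sdiff_of_subset (by
    apply Finset.range_subset_range.2; omega), Finset.card_range, Finset.card_range]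
  have : n + 2 - (k + 1) = n + 1 - k := by omega
  rw [this]
  simp [nsmul_eq_mul]

noncomputable def Pc (n : ℕ) : ℝ := ∏ i ∈ Finset.range n, ((i : ℝ) + 2)

noncomputable def Asum (n : ℕ) : ℝ :=
  ∑ d : ∀ i : Fin n, Fin (i + 2), (2 * (kvF n d : ℝ) - n)

noncomputable def Bsum (n : ℕ) : ℝ :=
  ∑ d : ∀ i : Fin n, Fin (i + 2), (2 * (kvF n d : ℝ) - n) ^ 2

lemma card_D (n : ℕ) : (Fintype.card (∀ i : Fin n, Fin (i + 2)) : ℝ) = Pc n := by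
  rw [Fintype.card_pi]
  simp only [Fintype.card_fin]
  push_cast
  rw [Fin.prod_univ_eq_prod_range (fun i => ((i:ℝ) + 2)) n]
  rfl

lemma Asum_succ (n : ℕ) : Asum (n+1) = (n+1) * Asum n := by
  rw [Asum, sum_step n (fun m => 2 * (m : ℝ) - ((n+1 : ℕ) : ℝ))]
  rw [Asum, Finset.mul_sum]
  refine Finset.sum_congr rfl fun p _ => ?_
  rw [innerSum' n (kvF n p) (kvF_le n p) (fun m => 2 * (m : ℝ) - ((n+1 : ℕ) : ℝ))]
  have hk := kvF_le n p
  have : ((n + 1 - kvF n p : ℕ) : ℝ) = (n:ℝ) + 1 - kvF n p := by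
    rw [Nat.cast_sub (by omega)]; push_cast; ring
  rw [this]; push_cast; ring

lemma Bsum_succ (n : ℕ) : Bsum (n+1) = n * Bsum n + (n+2) * Pc n := by
  rw [Bsum, sum_step n (fun m => (2 * (m : ℝ) - ((n+1 : ℕ) : ℝ))^2)]
  have hstep : ∀ p : ∀ i : Fin n, Fin (i + 2),
      (∑ a : Fin (n+2),
        (2 * ((if (a : ℕ) ≤ kvF n p then kvF n p else kvF n p + 1) : ℕ) - ((n+1 : ℕ) : ℝ))^2)
      = (n : ℝ) * (2 * (kvF n p : ℝ) - n)^2 + ((n : ℝ) + 2) := by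
    intro p
    rw [innerSum' n (kvF n p) (kvF_le n p) (fun m => (2 * (m : ℝ) - ((n+1 : ℕ) : ℝ))^2)]
    have hk := kvF_le n p
    have : ((n + 1 - kvF n p : ℕ) : ℝ) = (n:ℝ) + 1 - kvF n p := by
      rw [Nat.cast_sub (by omega)]; push_cast; ring
    rw [this]; push_cast; ring
  rw [Finset.sum_congr rfl (fun p _ => hstep p), Finset.sum_add_distrib,
    Finset.sum_const, ← Finset.mul_sum, nsmul_eq_mul, Finset.card_univ, card_D, Bsum]
  ring

lemma Asum_eq (n : ℕ) : Asum n = 0 := by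
  induction n with
  | zero => simp [Asum, kvF]
  | succ n ih => rw [Asum_succ, ih, mul_zero]

lemma Bsum_eq (n : ℕ) (hn : 1 ≤ n) : Bsum n = ((n : ℝ) + 2) / 3 * Pc n := by
  induction n with
  | zero => omega
  | succ n ih =>
    rcases Nat.eq_zero_or_pos n with h | h
    · subst h
      rw [Bsum_succ, Pc]
      have : Bsum 0 = 0 := by simp [Bsum, kvF]
      rw [this, Pc]
      norm_num
    · rw [Bsum_succ, ih h,
        show Pc (n+1) = ((n:ℝ)+2) * Pc n by rw [Pc, Pc, Finset.prod_range_succ]; ring]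
      push_cast; ring

def cyl (n : ℕ) (d : ∀ i : Fin n, Fin (i + 2)) : Set EulerPath :=
  {x | ∀ i : Fin n, x i = d i}

lemma cyl_measurable (n : ℕ) (d : ∀ i : Fin n, Fin (i + 2)) :
    MeasurableSet (cyl n d) := by
  have : cyl n d = ⋂ i : Fin n, (fun x : EulerPath => x i) ⁻¹' {d i} := by
    ext x; simp [cyl]
  rw [this]
  exact MeasurableSet.iInter fun i =>
    (measurable_pi_apply _) (measurableSet_singleton _)


lemma cyl_measure {η : MeasureTheory.Measure EulerPath} (hη : IsSymmetricMeasure η)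
    (n : ℕ) (d : ∀ i : Fin n, Fin (i + 2)) :
    η (cyl n d) = ∏ i ∈ Finset.range n, ((i : ℝ≥0∞) + 2)⁻¹ := by
  set c : EulerPath := fun m => if h : m < n then d ⟨m, h⟩ else 0 with hc
  have hset : cyl n d = {x | ∀ i < n, x i = c i} := by
    ext x
    constructor
    · intro hx i hi
      have := hx ⟨i, hi⟩
      simp only [hc]
      rw [dif_pos hi]
      exact this
    · intro hx i
      have := hx i i.isLt
      rw [hc] at this
      simpa [dif_pos i.isLt] using this
  rw [hset]
  exact hη.2 n c

lemma toReal_cyl_measure {η : MeasureTheory.Measure EulerPath} (hη : IsSymmetricMeasure η)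
    (n : ℕ) (d : ∀ i : Fin n, Fin (i + 2)) :
    (η (cyl n d)).toReal = (Pc n)⁻¹ := by
  rw [cyl_measure hη n d, ENNReal.toReal_prod, Pc, ← Finset.prod_inv_distrib]
  refine Finset.prod_congr rfl fun i _ => ?_
  rw [ENNReal.toReal_inv,
    show ((i:ℝ≥0∞) + 2) = ((i+2 : ℕ) : ℝ≥0∞) by push_cast; ring,
    ENNReal.toReal_natCast]
  push_cast; ring

lemma integral_dep {η : MeasureTheory.Measure EulerPath} (hη : IsSymmetricMeasure η)
    (n : ℕ) (g : ℕ → ℝ) :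
    ∫ x, g (kv x n) ∂η = (Pc n)⁻¹ * ∑ d : ∀ i : Fin n, Fin (i + 2), g (kvF n d) := by
  haveI := hη.1
  have hrep : (fun x => g (kv x n)) = fun x =>
      ∑ d : ∀ i : Fin n, Fin (i + 2),
        Set.indicator (cyl n d) (fun _ => g (kvF n d)) x := by
    funext x
    rw [Finset.sum_eq_single (fun i : Fin n => x i)]
    · rw [Set.indicator_of_mem (show x ∈ cyl n (fun i : Fin n => x i) from fun i => rfl) _, kvF_eq]
    · intro d _ hd
      apply Set.indicator_of_notMem
      intro hx
      exact hd (funext fun i => (hx i).symm)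
    · intro h; exact absurd (Finset.mem_univ _) h
  rw [hrep, integral_finset_sum _ (fun d _ =>
    (integrable_const (g (kvF n d))).indicator (cyl_measurable n d))]
  rw [Finset.mul_sum]
  refine Finset.sum_congr rfl fun d _ => ?_
  rw [integral_indicator_const _ (cyl_measurable n d), measureReal_def, toReal_cyl_measure hη n d,
    smul_eq_mul, mul_comm]

/-- For every `n ≥ 1`, the mean of `u_n` under `η` is `0` and its variance is
`∫ u_n² dη = (n+2)/3`. -/
theorem euler_u_variance
    (η : Measure EulerPath) (hη : IsSymmetricMeasure η) (n : ℕ) (hn : 1 ≤ n) :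
    (∫ x, (u n x) ^ 2 ∂η = ((n : ℝ) + 2) / 3) ∧ (∫ x, u n x ∂η = 0) := by
  have hP : (0 : ℝ) < Pc n := Finset.prod_pos fun i _ => by positivity
  constructor
  · have h1 : ∫ x, (u n x) ^ 2 ∂η = ∫ x, (fun k : ℕ => (2 * (k:ℝ) - n)^2) (kv x n) ∂η := by
      congr 1; funext x; rw [u]; push_cast; ring
    rw [h1, integral_dep hη n (fun k : ℕ => (2 * (k:ℝ) - n)^2)]
    have h2 : ∑ d : ∀ i : Fin n, Fin (i + 2), (2 * (kvF n d : ℝ) - n)^2 = Bsum n := rfl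
    rw [h2, Bsum_eq n hn]
    field_simp
  · have h1 : ∫ x, u n x ∂η = ∫ x, (fun k : ℕ => 2 * (k:ℝ) - n) (kv x n) ∂η := by
      congr 1; funext x; rw [u]; push_cast; ring
    rw [h1, integral_dep hη n (fun k : ℕ => 2 * (k:ℝ) - n)]
    have h2 : ∑ d : ∀ i : Fin n, Fin (i + 2), (2 * (kvF n d : ℝ) - n) = Asum n := rfl
    rw [h2, Asum_eq, mul_zero]
end

section
/- For η-almost every x ∈ X, k_n(x)/n → 1/2 as n → ∞ (almost-everywhere convergence, strengthening convergence in measure). -/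
open MeasureTheory Filter
open scoped ENNReal

namespace EulerAux

abbrev Pref (n : ℕ) : Type := ∀ i : Fin n, Fin ((i : ℕ) + 2)

def extP {n : ℕ} (c : Pref n) : EulerPath := fun i => if h : i < n then c ⟨i, h⟩ else 0

lemma kv_congr {x y : EulerPath} : ∀ {n : ℕ}, (∀ i < n, x i = y i) → kv x n = kv y n
  | 0, _ => rfl
  | n + 1, h => by
    have ih := kv_congr (x := x) (y := y) (n := n) (fun i hi => h i (Nat.lt_succ_of_lt hi))
    show (if (x n : ℕ) ≤ kv x n then kv x n else kv x n + 1)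
        = (if (y n : ℕ) ≤ kv y n then kv y n else kv y n + 1)
    rw [ih, h n (Nat.lt_succ_self n)]

lemma kv_succ (x : EulerPath) (n : ℕ) :
    kv x (n + 1) = if (x n : ℕ) ≤ kv x n then kv x n else kv x n + 1 := rfl

lemma kv_le (x : EulerPath) : ∀ n, kv x n ≤ n
  | 0 => le_refl 0
  | n + 1 => by
    rw [kv_succ]; split <;> simp [Nat.succ_le_succ (kv_le x n), Nat.le_succ_of_le (kv_le x n)]

lemma kv_le_succ (x : EulerPath) (n : ℕ) : kv x n ≤ kv x (n+1) := by
  rw [kv_succ]; split <;> omega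

lemma kv_succ_le (x : EulerPath) (n : ℕ) : kv x (n+1) ≤ kv x n + 1 := by
  rw [kv_succ]; split <;> omega

lemma kv_mono (x : EulerPath) {n m : ℕ} (h : n ≤ m) : kv x n ≤ kv x m := by
  induction m, h using Nat.le_induction with
  | base => exact le_rfl
  | succ m hm ih => exact le_trans ih (kv_le_succ x m)

lemma kv_sub (x : EulerPath) {n m : ℕ} (h : n ≤ m) : kv x m ≤ kv x n + (m - n) := by
  induction m, h using Nat.le_induction with
  | base => simp
  | succ m hm ih =>
    have := kv_succ_le x m
    omega

lemma measurable_kv (n : ℕ) : Measurable fun x : EulerPath => kv x n := by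
  induction n with
  | zero => exact measurable_const
  | succ n ih =>
    have hxn : Measurable fun x : EulerPath => (x n : ℕ) :=
      Measurable.of_discrete.comp (measurable_pi_apply n)
    have hpair : Measurable fun x : EulerPath => ((x n : ℕ), kv x n) := hxn.prodMk ih
    have hset : MeasurableSet {p : ℕ × ℕ | p.1 ≤ p.2} := .of_discrete
    have : Measurable fun x : EulerPath =>
        if ((x n : ℕ), kv x n) ∈ {p : ℕ × ℕ | p.1 ≤ p.2} then kv x n else kv x n + 1 :=
      Measurable.ite (hpair hset) ih (ih.add measurable_const)
    exact this

def Cyl (n : ℕ) (c : Pref n) : Set EulerPath := {x | ∀ i : Fin n, x i = c i}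

lemma cyl_eq (n : ℕ) (c : Pref n) : Cyl n c = {x : EulerPath | ∀ i < n, x i = extP c i} := by
  ext x
  constructor
  · intro hx i hi
    simp only [extP, dif_pos hi]
    exact hx ⟨i, hi⟩
  · intro hx i
    have := hx i i.2
    simpa only [extP, dif_pos i.2] using this

lemma cyl_measurable (n : ℕ) (c : Pref n) : MeasurableSet (Cyl n c) := by
  have : Cyl n c = ⋂ i : Fin n, (fun x : EulerPath => x i) ⁻¹' {c i} := by
    ext x; simp [Cyl]
  rw [this]
  exact MeasurableSet.iInter fun i => (measurable_pi_apply _) (measurableSet_singleton _)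

/-- The cylinder weight. -/
noncomputable def Wk (n : ℕ) : ℝ≥0∞ := ∏ i ∈ Finset.range n, ((i : ℝ≥0∞) + 2)⁻¹

lemma cyl_meas {η : Measure EulerPath} (hη : IsSymmetricMeasure η) (n : ℕ) (c : Pref n) :
    η (Cyl n c) = Wk n := by
  rw [cyl_eq]; exact hη.2 n (extP c)

lemma extP_agree {n : ℕ} (c : Pref n) (x : EulerPath) (hx : x ∈ Cyl n c) :
    kv (extP c) n = kv x n := by
  refine kv_congr fun i hi => ?_
  simp only [extP, dif_pos hi]
  exact (hx ⟨i, hi⟩).symm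

/-- The key lemma: lintegral of a function of `kv · n` as a finite sum over prefixes. -/
lemma key {η : Measure EulerPath} (hη : IsSymmetricMeasure η) (n : ℕ) (F : ℕ → ℝ≥0∞) :
    ∫⁻ x, F (kv x n) ∂η = ∑ c : Pref n, F (kv (extP c) n) * Wk n := by
  have hpt : ∀ x : EulerPath, F (kv x n)
      = ∑ c : Pref n, (Cyl n c).indicator (fun _ => F (kv (extP c) n)) x := by
    intro x
    have hx : x ∈ Cyl n (fun i : Fin n => x i) := fun i => rfl
    rw [Finset.sum_eq_single_of_mem (fun i : Fin n => x i) (Finset.mem_univ _)]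
    · rw [Set.indicator_of_mem hx, extP_agree _ x hx]
    · intro c _ hc
      refine Set.indicator_of_notMem (fun hmem => hc ?_) _
      funext i
      exact (hmem i).symm
  calc ∫⁻ x, F (kv x n) ∂η
      = ∫⁻ x, ∑ c : Pref n, (Cyl n c).indicator (fun _ => F (kv (extP c) n)) x ∂η :=
        lintegral_congr hpt
    _ = ∑ c : Pref n, ∫⁻ x, (Cyl n c).indicator (fun _ => F (kv (extP c) n)) x ∂η :=
        lintegral_finset_sum _ fun c _ =>
          (measurable_const.indicator (cyl_measurable n c))
    _ = ∑ c : Pref n, F (kv (extP c) n) * Wk n := by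
        refine Finset.sum_congr rfl fun c _ => ?_
        rw [lintegral_indicator (cyl_measurable n c), setLIntegral_const, cyl_meas hη]

/-- snoc for prefixes -/
def snocP {n : ℕ} (c : Pref n) (j : Fin (n + 2)) : Pref (n + 1) := fun i =>
  if h : (i : ℕ) < n then c ⟨i, h⟩
  else Fin.cast (by have hi := i.2; omega) j

def prefEquiv (n : ℕ) : Pref (n + 1) ≃ Pref n × Fin (n + 2) where
  toFun c := (fun i : Fin n => c ⟨i.1, Nat.lt_succ_of_lt i.2⟩, c ⟨n, Nat.lt_succ_self n⟩)
  invFun p := snocP p.1 p.2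
  left_inv c := by
    funext i
    by_cases h : (i : ℕ) < n
    · simp only [snocP, dif_pos h]
    · simp only [snocP, dif_neg h]
      have hi : i = ⟨n, Nat.lt_succ_self n⟩ := Fin.ext (by have := i.2; simp; omega)
      subst hi
      rfl
  right_inv p := by
    obtain ⟨c, j⟩ := p
    refine Prod.ext ?_ ?_
    · funext i
      simp only [snocP, dif_pos i.2]
    · simp only [snocP, dif_neg (lt_irrefl n)]
      rfl

lemma sum_pref_succ {n : ℕ} (G : Pref (n + 1) → ℝ≥0∞) :
    ∑ c : Pref (n + 1), G c = ∑ c : Pref n, ∑ j : Fin (n + 2), G (snocP c j) := by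
  have h1 : ∑ c : Pref (n + 1), G c = ∑ p : Pref n × Fin (n + 2), G (snocP p.1 p.2) :=
    Fintype.sum_equiv (prefEquiv n) _ _
      (fun c => congrArg G ((prefEquiv n).left_inv c).symm)
  rw [h1, Fintype.sum_prod_type]

lemma extP_snoc_lt {n : ℕ} (c : Pref n) (j : Fin (n + 2)) (i : ℕ) (hi : i < n) :
    extP (snocP c j) i = extP c i := by
  simp only [extP, dif_pos hi, dif_pos (Nat.lt_succ_of_lt hi), snocP]

lemma extP_snoc_last {n : ℕ} (c : Pref n) (j : Fin (n + 2)) :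
    ((extP (snocP c j) n : Fin (n + 2)) : ℕ) = (j : ℕ) := by
  simp only [extP, dif_pos (Nat.lt_succ_self n), snocP, dif_neg (lt_irrefl n)]
  rfl

lemma kv_extP_snoc {n : ℕ} (c : Pref n) (j : Fin (n + 2)) :
    kv (extP (snocP c j)) (n + 1)
      = if (j : ℕ) ≤ kv (extP c) n then kv (extP c) n else kv (extP c) n + 1 := by
  have h1 : kv (extP (snocP c j)) n = kv (extP c) n :=
    kv_congr fun i hi => extP_snoc_lt c j i hi
  show (if ((extP (snocP c j) n : Fin (n+2)) : ℕ) ≤ kv (extP (snocP c j)) n then _ else _) = _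
  rw [h1, extP_snoc_last]

lemma dist_sq_int (a b : ℕ) : ((Nat.dist a b : ℕ) : ℤ) ^ 2 = ((a : ℤ) - b) ^ 2 := by
  rcases le_total a b with h | h
  · rw [Nat.dist_eq_sub_of_le h, Nat.cast_sub h]; ring
  · rw [Nat.dist_eq_sub_of_le_right h, Nat.cast_sub h]

lemma sum_ite_le {n k : ℕ} (hk : k ≤ n) (a b : ℕ) :
    ∑ j ∈ Finset.range (n + 2), (if j ≤ k then a else b) = (k + 1) * a + (n + 1 - k) * b := by
  rw [Finset.sum_ite]
  have hfilter : Finset.filter (fun j => j ≤ k) (Finset.range (n + 2)) = Finset.range (k + 1) := by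
    ext j; simp only [Finset.mem_filter, Finset.mem_range]; omega
  have hcard2 : (Finset.filter (fun j => ¬ j ≤ k) (Finset.range (n + 2))).card = n + 1 - k := by
    have := Finset.card_filter_add_card_filter_not
      (s := Finset.range (n + 2)) (p := fun j => j ≤ k)
    rw [hfilter] at this
    simp only [Finset.card_range] at this ⊢
    omega
  rw [Finset.sum_const, Finset.sum_const, hfilter, hcard2, Finset.card_range]
  simp [mul_comm, Nat.smul_one_eq_cast]

lemma step_ineq (n k : ℕ) (hk : k ≤ n) :
    (k + 1) * (Nat.dist (2 * k) (n + 1)) ^ 2 + (n + 1 - k) * (Nat.dist (2 * (k + 1)) (n + 1)) ^ 2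
      ≤ (n + 2) * ((Nat.dist (2 * k) n) ^ 2 + 1) := by
  have h1 := dist_sq_int (2 * k) (n + 1)
  have h2 := dist_sq_int (2 * (k + 1)) (n + 1)
  have h3 := dist_sq_int (2 * k) n
  zify [hk, Nat.le_succ_of_le hk]
  push_cast at h1 h2 h3
  nlinarith [sq_nonneg ((2 * k : ℤ) - n)]


/-- second moment of `2 kv - n`. -/
noncomputable def Am (η : Measure EulerPath) (n : ℕ) : ℝ≥0∞ :=
  ∫⁻ x, ((Nat.dist (2 * kv x n) n ^ 2 : ℕ) : ℝ≥0∞) ∂η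

lemma sum_W {η : Measure EulerPath} (hη : IsSymmetricMeasure η) (n : ℕ) :
    ∑ _c : Pref n, Wk n = 1 := by
  have h := key hη n (fun _ => 1)
  have : ∫⁻ _x, (1 : ℝ≥0∞) ∂η = 1 := by
    haveI := hη.1
    simp
  rw [this] at h
  simpa using h.symm

lemma W_succ (n : ℕ) : ((n + 2 : ℕ) : ℝ≥0∞) * Wk (n + 1) = Wk n := by
  rw [Wk, Finset.prod_range_succ, ← Wk]
  have hne : ((n : ℝ≥0∞) + 2) ≠ 0 :=
    (lt_of_lt_of_le (by norm_num : (0:ℝ≥0∞) < 2) le_add_self).ne'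
  have hnt : ((n : ℝ≥0∞) + 2) ≠ ∞ := by
    simp [ENNReal.add_eq_top]
  calc ((n + 2 : ℕ) : ℝ≥0∞) * (Wk n * ((n : ℝ≥0∞) + 2)⁻¹)
      = Wk n * (((n : ℝ≥0∞) + 2) * ((n : ℝ≥0∞) + 2)⁻¹) := by push_cast; ring
    _ = Wk n := by rw [ENNReal.mul_inv_cancel hne hnt, mul_one]

lemma Am_rec {η : Measure EulerPath} (hη : IsSymmetricMeasure η) (n : ℕ) :
    Am η (n + 1) ≤ Am η n + 1 := by
  have hkey := key hη (n + 1) (fun m => ((Nat.dist (2 * m) (n + 1) ^ 2 : ℕ) : ℝ≥0∞))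
  rw [Am, hkey, sum_pref_succ]
  have hinner : ∀ c : Pref n,
      ∑ j : Fin (n + 2), ((Nat.dist (2 * kv (extP (snocP c j)) (n + 1)) (n + 1) ^ 2 : ℕ) : ℝ≥0∞)
        * Wk (n + 1)
      ≤ ((Nat.dist (2 * kv (extP c) n) n ^ 2 + 1 : ℕ) : ℝ≥0∞) * Wk n := by
    intro c
    set k := kv (extP c) n with hkdef
    have hk : k ≤ n := kv_le _ n
    have hstep : ∀ j : Fin (n + 2),
        Nat.dist (2 * kv (extP (snocP c j)) (n + 1)) (n + 1) ^ 2
          = if (j : ℕ) ≤ k then Nat.dist (2 * k) (n + 1) ^ 2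
            else Nat.dist (2 * (k + 1)) (n + 1) ^ 2 := by
      intro j
      rw [kv_extP_snoc]
      split <;> rfl
    calc ∑ j : Fin (n + 2),
          ((Nat.dist (2 * kv (extP (snocP c j)) (n + 1)) (n + 1) ^ 2 : ℕ) : ℝ≥0∞) * Wk (n + 1)
        = ((∑ j ∈ Finset.range (n + 2), (if j ≤ k then Nat.dist (2 * k) (n + 1) ^ 2
            else Nat.dist (2 * (k + 1)) (n + 1) ^ 2) : ℕ) : ℝ≥0∞) * Wk (n + 1) := by
          rw [← Finset.sum_mul]
          congr 1
          rw [Nat.cast_sum, ← Fin.sum_univ_eq_sum_range]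
          exact Finset.sum_congr rfl fun j _ => by rw [hstep j]
      _ ≤ (((n + 2) * (Nat.dist (2 * k) n ^ 2 + 1) : ℕ) : ℝ≥0∞) * Wk (n + 1) := by
          refine mul_le_mul_left ?_ _
          have hnat : (∑ j ∈ Finset.range (n + 2), (if j ≤ k then Nat.dist (2 * k) (n + 1) ^ 2
              else Nat.dist (2 * (k + 1)) (n + 1) ^ 2))
              ≤ (n + 2) * (Nat.dist (2 * k) n ^ 2 + 1) := by
            rw [sum_ite_le hk]; exact step_ineq n k hk
          exact_mod_cast hnat
      _ = ((Nat.dist (2 * k) n ^ 2 + 1 : ℕ) : ℝ≥0∞) * (((n + 2 : ℕ) : ℝ≥0∞) * Wk (n + 1)) := by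
          push_cast; ring
      _ = ((Nat.dist (2 * k) n ^ 2 + 1 : ℕ) : ℝ≥0∞) * Wk n := by rw [W_succ]
  calc ∑ c : Pref n, ∑ j : Fin (n + 2),
        ((Nat.dist (2 * kv (extP (snocP c j)) (n + 1)) (n + 1) ^ 2 : ℕ) : ℝ≥0∞) * Wk (n + 1)
      ≤ ∑ c : Pref n, ((Nat.dist (2 * kv (extP c) n) n ^ 2 + 1 : ℕ) : ℝ≥0∞) * Wk n :=
        Finset.sum_le_sum fun c _ => hinner c
    _ = (∑ c : Pref n, ((Nat.dist (2 * kv (extP c) n) n ^ 2 : ℕ) : ℝ≥0∞) * Wk n)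
        + ∑ _c : Pref n, Wk n := by
        rw [← Finset.sum_add_distrib]
        refine Finset.sum_congr rfl fun c _ => ?_
        push_cast
        ring
    _ = Am η n + 1 := by
        rw [sum_W hη, ← key hη n (fun m => ((Nat.dist (2 * m) n ^ 2 : ℕ) : ℝ≥0∞))]
        rfl

lemma Am_zero (η : Measure EulerPath) : Am η 0 = 0 := by
  rw [Am]
  simp [kv]

lemma Am_le {η : Measure EulerPath} (hη : IsSymmetricMeasure η) (n : ℕ) :
    Am η n ≤ (n : ℝ≥0∞) := by
  induction n with
  | zero => simp [Am_zero]
  | succ n ih =>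
    calc Am η (n + 1) ≤ Am η n + 1 := Am_rec hη n
      _ ≤ (n : ℝ≥0∞) + 1 := by gcongr
      _ = ((n + 1 : ℕ) : ℝ≥0∞) := by push_cast; ring

lemma chebyshev {η : Measure EulerPath} (hη : IsSymmetricMeasure η) (n t : ℕ) (ht : 0 < t) :
    η {x | t ≤ Nat.dist (2 * kv x n) n} ≤ (n : ℝ≥0∞) / ((t : ℝ≥0∞)) ^ 2 := by
  have hmeas : Measurable fun x : EulerPath => ((Nat.dist (2 * kv x n) n ^ 2 : ℕ) : ℝ≥0∞) :=
    (measurable_from_nat (f := fun m : ℕ => ((Nat.dist (2 * m) n ^ 2 : ℕ) : ℝ≥0∞))).comp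
      (measurable_kv n)
  have hsub : {x : EulerPath | t ≤ Nat.dist (2 * kv x n) n}
      ⊆ {x | ((t : ℝ≥0∞)) ^ 2 ≤ ((Nat.dist (2 * kv x n) n ^ 2 : ℕ) : ℝ≥0∞)} := by
    intro x hx
    have : t ^ 2 ≤ Nat.dist (2 * kv x n) n ^ 2 := Nat.pow_le_pow_left hx 2
    calc ((t : ℝ≥0∞)) ^ 2 = ((t ^ 2 : ℕ) : ℝ≥0∞) := by push_cast; ring
      _ ≤ _ := by exact_mod_cast this
  have hcheb := mul_meas_ge_le_lintegral₀ (μ := η) hmeas.aemeasurable (((t : ℝ≥0∞)) ^ 2)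
  have h1 : ((t : ℝ≥0∞)) ^ 2 * η {x | t ≤ Nat.dist (2 * kv x n) n} ≤ (n : ℝ≥0∞) :=
    le_trans (le_trans (mul_le_mul_right (measure_mono hsub) _) hcheb) (Am_le hη n)
  rw [ENNReal.le_div_iff_mul_le (Or.inl (by positivity)) (Or.inl (by simp))]
  rw [mul_comm]
  exact h1


lemma nat_mul_div_succ (a b : ℕ) (hb : 0 < b) : a ≤ b * (a / b + 1) := by
  have h1 := Nat.div_add_mod a b
  have h2 := Nat.mod_lt a hb
  calc a = b * (a / b) + a % b := h1.symm
    _ ≤ b * (a / b) + b := by omega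
    _ = b * (a / b + 1) := by ring

lemma eta_bad_le {η : Measure EulerPath} (hη : IsSymmetricMeasure η) (j m : ℕ) (hm : 1 ≤ m) :
    η {x | (m * m) / (j + 1) + 1 ≤ Nat.dist (2 * kv x (m * m)) (m * m)}
      ≤ ENNReal.ofReal (((j : ℝ) + 1) ^ 2 / (m : ℝ) ^ 2) := by
  set t : ℕ := (m * m) / (j + 1) + 1 with hts
  have ht : 0 < t := Nat.succ_pos _
  have h1 := chebyshev hη (m * m) t ht
  refine le_trans h1 ?_
  -- convert to real
  have htreal : (0 : ℝ) < (t : ℝ) ^ 2 := by positivity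
  have hcast : ((m * m : ℕ) : ℝ≥0∞) / ((t : ℝ≥0∞)) ^ 2
      = ENNReal.ofReal (((m * m : ℕ) : ℝ) / ((t : ℝ)) ^ 2) := by
    rw [ENNReal.ofReal_div_of_pos htreal]
    congr 1
    · rw [ENNReal.ofReal_natCast]
    · rw [ENNReal.ofReal_pow (by positivity), ENNReal.ofReal_natCast]
  rw [hcast]
  refine ENNReal.ofReal_le_ofReal ?_
  -- real inequality: m^2/t^2 ≤ (j+1)^2/m^2  given m*m ≤ (j+1)*t
  have hkey : (m * m) ≤ (j + 1) * t := nat_mul_div_succ (m * m) (j + 1) (Nat.succ_pos j)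
  have hkeyR : ((m : ℝ) * m) ≤ ((j : ℝ) + 1) * t := by exact_mod_cast hkey
  have hmR : (0 : ℝ) < m := by exact_mod_cast hm
  have htR : (0 : ℝ) < t := by exact_mod_cast ht
  rw [div_le_div_iff₀ htreal (by positivity), Nat.cast_mul]
  have h2 := mul_le_mul hkeyR hkeyR (by positivity) (by positivity)
  nlinarith [h2]

lemma borel_cantelli {η : Measure EulerPath} (hη : IsSymmetricMeasure η) :
    ∀ᵐ x ∂η, ∀ j : ℕ, ∀ᶠ m : ℕ in atTop,
      Nat.dist (2 * kv x (m * m)) (m * m) ≤ (m * m) / (j + 1) := by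
  rw [ae_all_iff]
  intro j
  set s : ℕ → Set EulerPath :=
    fun m => {x | (m * m) / (j + 1) + 1 ≤ Nat.dist (2 * kv x (m * m)) (m * m)} with hs
  have hsum : (∑' m, η (s m)) ≠ ∞ := by
    haveI := hη.1
    set h : ℕ → ℝ := fun m => if m = 0 then 1 else ((j : ℝ) + 1) ^ 2 / (m : ℝ) ^ 2 with hh
    have hnonneg : ∀ m, 0 ≤ h m := by
      intro m; rw [hh]; dsimp only; split <;> positivity
    have hsummable : Summable h := by
      have hbase : Summable (fun m : ℕ => ((j : ℝ) + 1) ^ 2 * (1 / (m : ℝ) ^ 2)) :=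
        (Real.summable_one_div_nat_pow.mpr one_lt_two).mul_left _
      have h1 : Summable (fun m : ℕ => h (m + 1)) := by
        refine (hbase.comp_injective (add_left_injective 1)).congr fun m => ?_
        rw [hh]
        simp only [Function.comp_apply, Nat.succ_ne_zero, if_false]
        push_cast
        rw [mul_one_div]
      exact (summable_nat_add_iff 1).mp h1
    have hle : ∀ m, η (s m) ≤ ENNReal.ofReal (h m) := by
      intro m
      rcases Nat.eq_zero_or_pos m with rfl | hm
      · rw [hh]
        norm_num
        exact prob_le_one (μ := η)
      · rw [hh]; simp only [if_neg (Nat.pos_iff_ne_zero.mp hm)]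
        exact eta_bad_le hη j m hm
    have hle2 : (∑' m, η (s m)) ≤ ENNReal.ofReal (∑' m, h m) := by
      calc (∑' m, η (s m)) ≤ ∑' m, ENNReal.ofReal (h m) := ENNReal.tsum_le_tsum hle
        _ = ENNReal.ofReal (∑' m, h m) := (ENNReal.ofReal_tsum_of_nonneg hnonneg hsummable).symm
    exact ne_top_of_le_ne_top ENNReal.ofReal_ne_top hle2
  filter_upwards [ae_eventually_notMem hsum] with x hx
  filter_upwards [hx] with m hm
  rw [hs] at hm
  simp only [Set.mem_setOf_eq, not_le] at hm
  omega


lemma dist_cast_real (a b : ℕ) : ((Nat.dist a b : ℕ) : ℝ) = |(a : ℝ) - b| := by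
  rcases le_total a b with h | h
  · rw [Nat.dist_eq_sub_of_le h, Nat.cast_sub h, abs_of_nonpos (by
      simp only [sub_nonpos]; exact_mod_cast h), neg_sub]
  · rw [Nat.dist_eq_sub_of_le_right h, Nat.cast_sub h, abs_of_nonneg (by
      simp only [sub_nonneg]; exact_mod_cast h)]

lemma tendsto_squares (x : EulerPath)
    (H : ∀ j : ℕ, ∀ᶠ m : ℕ in atTop,
      Nat.dist (2 * kv x (m * m)) (m * m) ≤ (m * m) / (j + 1)) :
    Tendsto (fun m : ℕ => (kv x (m * m) : ℝ) / ((m * m : ℕ) : ℝ)) atTop (nhds (1 / 2)) := by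
  rw [Metric.tendsto_atTop]
  intro ε hε
  obtain ⟨j, hj⟩ := exists_nat_one_div_lt hε
  obtain ⟨M₀, hM₀⟩ := (H j).exists_forall_of_atTop
  refine ⟨max M₀ 1, fun m hm => ?_⟩
  have hmM : M₀ ≤ m := le_trans (le_max_left _ _) hm
  have hm1 : 1 ≤ m := le_trans (le_max_right _ _) hm
  have hd := hM₀ m hmM
  set Mn : ℕ := m * m with hMn
  have hMpos : (0 : ℝ) < (Mn : ℝ) := by
    have : 1 ≤ Mn := Nat.one_le_iff_ne_zero.mpr (by positivity)
    exact_mod_cast Nat.lt_of_lt_of_le Nat.zero_lt_one this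
  set K : ℕ := kv x Mn with hK
  have heq : (K : ℝ) / (Mn : ℝ) - 1 / 2 = ((2 * K : ℝ) - Mn) / (2 * Mn) := by
    field_simp
  rw [Real.dist_eq, heq, abs_div, abs_of_pos (by positivity : (0:ℝ) < 2 * (Mn:ℝ))]
  have habs : |(2 * K : ℝ) - Mn| = ((Nat.dist (2 * K) Mn : ℕ) : ℝ) := by
    rw [dist_cast_real]
    push_cast
    ring_nf
  rw [habs]
  have hb1 : ((Nat.dist (2 * K) Mn : ℕ) : ℝ) ≤ ((Mn / (j + 1) : ℕ) : ℝ) := by exact_mod_cast hd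
  have hb2 : ((Mn / (j + 1) : ℕ) : ℝ) ≤ (Mn : ℝ) / ((j : ℝ) + 1) := by
    have := Nat.cast_div_le (m := Mn) (n := j + 1) (α := ℝ)
    push_cast at this ⊢
    exact this
  calc ((Nat.dist (2 * K) Mn : ℕ) : ℝ) / (2 * Mn)
      ≤ ((Mn : ℝ) / ((j : ℝ) + 1)) / (2 * Mn) := by
        apply div_le_div_of_nonneg_right ?_ (by positivity)
        exact le_trans hb1 hb2
    _ = 1 / (2 * ((j : ℝ) + 1)) := by field_simp
    _ < ε := by
        refine lt_of_le_of_lt ?_ hj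
        rw [div_le_div_iff₀ (by positivity) (by positivity)]
        nlinarith [(by positivity : (0:ℝ) < (j:ℝ) + 1)]

lemma tendsto_sqrt_atTop : Tendsto Nat.sqrt atTop atTop := by
  rw [tendsto_atTop_atTop]
  intro b
  exact ⟨b * b, fun n hn => le_trans (le_of_eq (Nat.sqrt_eq b).symm) (Nat.sqrt_le_sqrt hn)⟩

lemma tendsto_all (x : EulerPath)
    (h2 : Tendsto (fun m : ℕ => (kv x (m * m) : ℝ) / ((m * m : ℕ) : ℝ)) atTop (nhds (1 / 2))) :
    Tendsto (fun n : ℕ => (kv x n : ℝ) / (n : ℝ)) atTop (nhds (1 / 2)) := by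
  have hg : Tendsto (fun n : ℕ => (kv x (Nat.sqrt n * Nat.sqrt n) : ℝ)
      / ((Nat.sqrt n * Nat.sqrt n : ℕ) : ℝ)) atTop (nhds (1 / 2)) := h2.comp tendsto_sqrt_atTop
  have hinv : Tendsto (fun n : ℕ => 2 / (Nat.sqrt n : ℝ)) atTop (nhds 0) :=
    (tendsto_const_div_atTop_nhds_zero_nat 2).comp tendsto_sqrt_atTop
  have hlow : Tendsto (fun n : ℕ => (kv x (Nat.sqrt n * Nat.sqrt n) : ℝ)
      / ((Nat.sqrt n * Nat.sqrt n : ℕ) : ℝ) - 2 / (Nat.sqrt n : ℝ)) atTop (nhds (1 / 2)) := by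
    simpa using hg.sub hinv
  have hup : Tendsto (fun n : ℕ => (kv x (Nat.sqrt n * Nat.sqrt n) : ℝ)
      / ((Nat.sqrt n * Nat.sqrt n : ℕ) : ℝ) + 2 / (Nat.sqrt n : ℝ)) atTop (nhds (1 / 2)) := by
    simpa using hg.add hinv
  refine tendsto_of_tendsto_of_tendsto_of_le_of_le' hlow hup ?_ ?_
  · -- lower bound eventually
    filter_upwards [eventually_ge_atTop 1] with n hn
    set m : ℕ := Nat.sqrt n with hm
    have hm1 : 1 ≤ m := Nat.sqrt_pos.mpr hn
    have hmn : m * m ≤ n := Nat.sqrt_le n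
    have hnm : n ≤ m * m + 2 * m := by
      have h1 := Nat.lt_succ_sqrt n
      rw [← hm] at h1
      have h2 : Nat.succ m * Nat.succ m = m * m + 2 * m + 1 := by
        rw [Nat.succ_eq_add_one]; ring
      omega
    have hKle : kv x (m * m) ≤ kv x n := kv_mono x hmn
    have hKsq : kv x (m * m) ≤ m * m := kv_le x _
    set K : ℕ := kv x (m * m) with hK
    have hMpos : (0 : ℝ) < (m : ℝ) := by exact_mod_cast hm1
    have hMMpos : (0 : ℝ) < ((m * m : ℕ) : ℝ) := by positivity
    have hNpos : (0 : ℝ) < (n : ℝ) := by exact_mod_cast hn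
    have step1 : (K : ℝ) / ((m * m : ℕ) : ℝ) - 2 / (m : ℝ) ≤ (K : ℝ) / (n : ℝ) := by
      have hle : (n : ℝ) ≤ (m : ℝ) * m + 2 * m := by exact_mod_cast hnm
      have h1 : (K : ℝ) / ((m : ℝ) * m + 2 * m) ≤ (K : ℝ) / (n : ℝ) :=
        div_le_div_of_nonneg_left (by positivity) hNpos hle
      refine le_trans ?_ h1
      have hKR : (K : ℝ) ≤ (m : ℝ) * m := by exact_mod_cast hKsq
      rw [div_sub_div _ _ (by positivity : ((m * m : ℕ) : ℝ) ≠ 0) (by positivity : (m : ℝ) ≠ 0),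
        div_le_div_iff₀ (by positivity) (by positivity)]
      push_cast
      nlinarith [hMpos, hKR, (by positivity : (0:ℝ) ≤ (K:ℝ))]
    refine le_trans step1 ?_
    have : (K : ℝ) ≤ (kv x n : ℝ) := by exact_mod_cast hKle
    exact div_le_div_of_nonneg_right this hNpos.le
  · -- upper bound eventually
    filter_upwards [eventually_ge_atTop 1] with n hn
    set m : ℕ := Nat.sqrt n with hm
    have hm1 : 1 ≤ m := Nat.sqrt_pos.mpr hn
    have hmn : m * m ≤ n := Nat.sqrt_le n
    have hnm : n ≤ m * m + 2 * m := by
      have h1 := Nat.lt_succ_sqrt n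
      rw [← hm] at h1
      have h2 : Nat.succ m * Nat.succ m = m * m + 2 * m + 1 := by
        rw [Nat.succ_eq_add_one]; ring
      omega
    have hKup : kv x n ≤ kv x (m * m) + 2 * m := by
      have h1 := kv_sub x hmn
      omega
    set K : ℕ := kv x (m * m) with hK
    have hMpos : (0 : ℝ) < (m : ℝ) := by exact_mod_cast hm1
    have hMMpos : (0 : ℝ) < ((m * m : ℕ) : ℝ) := by positivity
    have hNpos : (0 : ℝ) < (n : ℝ) := by exact_mod_cast hn
    have hstep : (kv x n : ℝ) / (n : ℝ) ≤ ((K : ℝ) + 2 * m) / ((m * m : ℕ) : ℝ) := by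
      have hup1 : (kv x n : ℝ) ≤ (K : ℝ) + 2 * m := by exact_mod_cast hKup
      have hmmn : ((m * m : ℕ) : ℝ) ≤ (n : ℝ) := by exact_mod_cast hmn
      calc (kv x n : ℝ) / (n : ℝ) ≤ ((K : ℝ) + 2 * m) / (n : ℝ) :=
            div_le_div_of_nonneg_right hup1 hNpos.le
        _ ≤ ((K : ℝ) + 2 * m) / ((m * m : ℕ) : ℝ) :=
            div_le_div_of_nonneg_left (by positivity) hMMpos hmmn
    refine hstep.trans (le_of_eq ?_)
    push_cast
    field_simp

end EulerAux

/-- For `η`-almost every path `x`, `k_n(x)/n → 1/2`. -/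
theorem euler_kn_over_n_tendsto_half_ae
    (η : Measure EulerPath) (hη : IsSymmetricMeasure η) :
    ∀ᵐ x ∂η, Tendsto (fun n => (kv x n : ℝ) / (n : ℝ)) atTop (nhds (1 / 2)) := by
  filter_upwards [EulerAux.borel_cantelli hη] with x hx
  exact EulerAux.tendsto_all x (EulerAux.tendsto_squares x hx)
end
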